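/- For all a, b ∈ E one has ‖S^n(a) − S^n(b)‖ ≤ (√3·σn + 2ν)·‖a − b‖. (Pointwise Lipschitz continuity of the regularised Bingham stress, the core of the Lipschitz bound (eq:anlipschitz) in Lemma 4.2(c).) -/

import Mathlib

lemma key_ineq (ε u v t A B : ℝ) (hε : 0 < ε) (hu : 0 ≤ u) (hv : 0 ≤ v)
    (hA : A^2 = u + ε^2) (hB : B^2 = v + ε^2) (hA0 : 0 < A) (hB0 : 0 < B)
    (ht : t^2 ≤ u*v) :
    ε^2 * (u * B^2 + v * A^2 - 2*t*(A*B)) ≤ (u+v-2*t) * (A^2*B^2) := by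
  have hu' : u = A^2 - ε^2 := by linarith
  have hv' : v = B^2 - ε^2 := by linarith
  subst hu' hv'
  have hAe : ε ≤ A := by nlinarith
  have hBe : ε ≤ B := by nlinarith
  have he : ε^2 ≤ A*B := by nlinarith
  have h2 : t^2 ≤ (A*B - ε^2)^2 := by nlinarith [sq_nonneg (A - B), sq_nonneg (ε*(A-B))]
  have hd : t ≤ A*B - ε^2 := by nlinarith
  nlinarith [mul_nonneg (mul_nonneg (le_of_lt (mul_pos hA0 hB0)) (by linarith : (0:ℝ) ≤ A*B - ε^2)) (by linarith : (0:ℝ) ≤ A*B - ε^2 - t),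
    mul_nonneg (sq_nonneg (A - B)) (by positivity : (0:ℝ) ≤ (A*B)^2 + ε^4)]

lemma key_vec {E : Type*} [NormedAddCommGroup E] [InnerProductSpace ℝ E]
    (ε : ℝ) (hε : 0 < ε) (a b : E) :
    ‖(Real.sqrt (‖a‖^2 + ε^2))⁻¹ • a - (Real.sqrt (‖b‖^2 + ε^2))⁻¹ • b‖ ≤ ε⁻¹ * ‖a - b‖ := by
  set u := ‖a‖^2 with hu
  set v := ‖b‖^2 with hv
  set t := (inner ℝ a b : ℝ) with htdef
  set A := Real.sqrt (u + ε^2) with hAdef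
  set B := Real.sqrt (v + ε^2) with hBdef
  have hu0 : 0 ≤ u := sq_nonneg _
  have hv0 : 0 ≤ v := sq_nonneg _
  have hA0 : 0 < A := Real.sqrt_pos.2 (by positivity)
  have hB0 : 0 < B := Real.sqrt_pos.2 (by positivity)
  have hA2 : A^2 = u + ε^2 := Real.sq_sqrt (by positivity)
  have hB2 : B^2 = v + ε^2 := Real.sq_sqrt (by positivity)
  have ht : t^2 ≤ u*v := by
    have := real_inner_mul_inner_self_le a b
    rw [real_inner_self_eq_norm_sq, real_inner_self_eq_norm_sq] at this
    nlinarith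
  have hsub : ‖a - b‖^2 = u - 2*t + v := by
    rw [hu, hv, htdef, norm_sub_sq_real]
  have hX : ‖A⁻¹ • a - B⁻¹ • b‖^2 = A⁻¹^2 * u - 2*(A⁻¹*(B⁻¹*t)) + B⁻¹^2 * v := by
    rw [norm_sub_sq_real, norm_smul, norm_smul, inner_smul_left, inner_smul_right]
    simp [Real.norm_eq_abs, abs_of_pos hA0, abs_of_pos hB0, mul_pow, hu, hv, htdef]
  have key := key_ineq ε u v t A B hε hu0 hv0 hA2 hB2 hA0 hB0 ht
  have hsq : ‖A⁻¹ • a - B⁻¹ • b‖^2 ≤ (ε⁻¹ * ‖a - b‖)^2 := by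
    rw [hX, mul_pow, hsub]
    rw [show (ε⁻¹:ℝ)^2 * (u - 2*t + v) = (u + v - 2*t) / ε^2 by field_simp; ring,
        show A⁻¹^2 * u - 2*(A⁻¹*(B⁻¹*t)) + B⁻¹^2 * v
           = (u * B^2 + v * A^2 - 2*t*(A*B)) / (A^2*B^2) by field_simp; ring]
    rw [div_le_div_iff₀ (by positivity) (by positivity)]
    linarith
  have h1 : 0 ≤ ε⁻¹ * ‖a - b‖ := by positivity
  nlinarith [norm_nonneg (A⁻¹ • a - B⁻¹ • b)]

theorem stmt_5 {E : Type*} [NormedAddCommGroup E] [InnerProductSpace ℝ E]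
    (σ ν : ℝ) (hσ : 0 < σ) (hν : 0 < ν) (n : ℕ) (hn : 0 < n)
    (S : E → E)
    (hS : ∀ x, S x = (σ / Real.sqrt (‖x‖ ^ 2 + ((n : ℝ))⁻¹ ^ 2) + 2 * ν) • x)
    (a b : E) :
    ‖S a - S b‖ ≤ (Real.sqrt 3 * σ * n + 2 * ν) * ‖a - b‖ := by
  have hε : (0:ℝ) < (n:ℝ)⁻¹ := by positivity
  set ε : ℝ := (n:ℝ)⁻¹ with hεdef
  set A := Real.sqrt (‖a‖^2 + ε^2) with hAdef
  set B := Real.sqrt (‖b‖^2 + ε^2) with hBdef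
  have hA0 : 0 < A := Real.sqrt_pos.2 (by positivity)
  have hB0 : 0 < B := Real.sqrt_pos.2 (by positivity)
  have hdecomp : S a - S b = σ • (A⁻¹ • a - B⁻¹ • b) + (2*ν) • (a - b) := by
    rw [hS a, hS b, div_eq_mul_inv, div_eq_mul_inv]
    module
  have hkey := key_vec ε hε a b
  rw [← hAdef, ← hBdef] at hkey
  have htri : ‖S a - S b‖ ≤ σ * ‖A⁻¹ • a - B⁻¹ • b‖ + (2*ν) * ‖a - b‖ := by
    rw [hdecomp]
    calc ‖σ • (A⁻¹ • a - B⁻¹ • b) + (2*ν) • (a - b)‖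
        ≤ ‖σ • (A⁻¹ • a - B⁻¹ • b)‖ + ‖(2*ν) • (a - b)‖ := norm_add_le _ _
      _ = σ * ‖A⁻¹ • a - B⁻¹ • b‖ + (2*ν) * ‖a - b‖ := by
          rw [norm_smul, norm_smul, Real.norm_eq_abs, Real.norm_eq_abs,
            abs_of_pos hσ, abs_of_pos (by linarith : (0:ℝ) < 2*ν)]
  have hεinv : ε⁻¹ = (n:ℝ) := by rw [hεdef, inv_inv]
  have hsqrt3 : (1:ℝ) ≤ Real.sqrt 3 := by
    rw [show (1:ℝ) = Real.sqrt 1 from Real.sqrt_one.symm]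
    exact Real.sqrt_le_sqrt (by norm_num)
  have hn0 : (0:ℝ) ≤ (n:ℝ) := Nat.cast_nonneg n
  have := hkey
  rw [hεinv] at this
  nlinarith [norm_nonneg (a - b), mul_le_mul_of_nonneg_left this (le_of_lt hσ),
    mul_nonneg (mul_nonneg hσ.le hn0) (norm_nonneg (a-b))]
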